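/- Let X be a completely regular Hausdorff (Tychonoff) space and let H and H' be non-vanishing closed ideals of C_B(X). Then the following are equivalent: (1) sp(H) and sp(H') are homeomorphic; (2) the partially ordered sets (sub(H), ⊆) and (sub(H'), ⊆) of closed subideals of H and of H', respectively, are order-isomorphic. -/

import Mathlib

open BoundedContinuousFunction Set Filter Topology

section Preamble

variable {X : Type*} [TopologicalSpace X] {𝕜 : Type*} [RCLike 𝕜]

theorem betaExt_aux (f : X →ᵇ 𝕜) :
    Continuous (fun x => (⟨f x, by
      simpa [Metric.mem_closedBall, dist_zero_right] using f.norm_coe_le_norm x⟩ :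
        Metric.closedBall (0 : 𝕜) ‖f‖)) :=
  f.continuous.subtype_mk _

/-- `f_β`, the unique continuous extension of a bounded continuous function `f : X → 𝕜` to the
Stone–Čech compactification `βX`. -/
noncomputable def betaExt (f : X →ᵇ 𝕜) : StoneCech X → 𝕜 :=
  haveI : CompactSpace (Metric.closedBall (0 : 𝕜) ‖f‖) :=
    isCompact_iff_compactSpace.mp (isCompact_closedBall 0 ‖f‖)
  fun p => (stoneCechExtend (betaExt_aux f) p).1

theorem betaExt_unit (f : X →ᵇ 𝕜) (x : X) : betaExt f (stoneCechUnit x) = f x := by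
  haveI : CompactSpace (Metric.closedBall (0 : 𝕜) ‖f‖) :=
    isCompact_iff_compactSpace.mp (isCompact_closedBall 0 ‖f‖)
  exact congrArg Subtype.val (congrFun (stoneCechExtend_extends (betaExt_aux f)) x)

theorem continuous_betaExt (f : X →ᵇ 𝕜) : Continuous (betaExt f) := by
  haveI : CompactSpace (Metric.closedBall (0 : 𝕜) ‖f‖) :=
    isCompact_iff_compactSpace.mp (isCompact_closedBall 0 ‖f‖)
  exact continuous_subtype_val.comp (continuous_stoneCechExtend _)

/-- `λ_G X`, the union over `g ∈ G` of the cozero-sets in `βX` of the extensions `g_β`. -/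
def lambdaSet (G : Ideal (X →ᵇ 𝕜)) : Set (StoneCech X) :=
  ⋃ g ∈ G, {p | betaExt g p ≠ 0}

end Preamble

section Aux

open TopologicalSpace ContinuousMap

variable {X : Type*} [TopologicalSpace X] {𝕜 : Type*} [RCLike 𝕜]

theorem betaExt_norm_le (f : X →ᵇ 𝕜) (p : StoneCech X) : ‖betaExt f p‖ ≤ ‖f‖ := by
  haveI : CompactSpace (Metric.closedBall (0 : 𝕜) ‖f‖) :=
    isCompact_iff_compactSpace.mp (isCompact_closedBall 0 ‖f‖)
  have h2 := (stoneCechExtend (betaExt_aux f) p).2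
  rw [Metric.mem_closedBall, dist_zero_right] at h2
  exact h2

theorem betaExt_eq_of_agree {f : X →ᵇ 𝕜} {g : StoneCech X → 𝕜} (hg : Continuous g)
    (h : ∀ x, g (stoneCechUnit x) = f x) : betaExt f = g := by
  refine Continuous.ext_on denseRange_stoneCechUnit (continuous_betaExt f) hg ?_
  rintro - ⟨x, rfl⟩
  rw [betaExt_unit, h]

/-- `C_B(X) ≅ C(βX, 𝕜)` as rings, via `f ↦ f_β`. -/
noncomputable def betaHom : (X →ᵇ 𝕜) ≃+* C(StoneCech X, 𝕜) where
  toFun f := ⟨betaExt f, continuous_betaExt f⟩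
  invFun g := (mkOfCompact g).compContinuous ⟨stoneCechUnit, continuous_stoneCechUnit⟩
  left_inv f := by
    ext x
    exact betaExt_unit f x
  right_inv g := by
    ext p
    exact congrFun (betaExt_eq_of_agree g.continuous fun x => rfl) p
  map_add' f g := by
    ext p
    exact congrFun
      (betaExt_eq_of_agree ((continuous_betaExt f).add (continuous_betaExt g))
        (fun x => by simp [betaExt_unit])) p
  map_mul' f g := by
    ext p
    exact congrFun
      (betaExt_eq_of_agree ((continuous_betaExt f).mul (continuous_betaExt g))
        (fun x => by simp [betaExt_unit])) p

theorem coe_betaHom (f : X →ᵇ 𝕜) : ⇑(betaHom f : C(StoneCech X, 𝕜)) = betaExt f := rfl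

theorem betaExt_symm_betaHom (g : C(StoneCech X, 𝕜)) :
    betaExt ((betaHom (X := X) (𝕜 := 𝕜)).symm g) = ⇑g := by
  rw [← coe_betaHom, betaHom.apply_symm_apply]

theorem norm_betaHom (f : X →ᵇ 𝕜) : ‖(betaHom f : C(StoneCech X, 𝕜))‖ = ‖f‖ := by
  refine le_antisymm ((ContinuousMap.norm_le _ (norm_nonneg f)).mpr fun p => ?_)
    ((BoundedContinuousFunction.norm_le (norm_nonneg _)).mpr fun x => ?_)
  · exact betaExt_norm_le f p
  · calc ‖f x‖ = ‖betaExt f (stoneCechUnit x)‖ := by rw [betaExt_unit]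
      _ ≤ _ := (betaHom f : C(StoneCech X, 𝕜)).norm_coe_le_norm (stoneCechUnit x)

theorem isometry_betaHom : Isometry (betaHom (X := X) (𝕜 := 𝕜)) := by
  refine Isometry.of_dist_eq fun f g => ?_
  rw [dist_eq_norm, dist_eq_norm, ← map_sub, norm_betaHom]

theorem isometry_betaHom_symm : Isometry (betaHom (X := X) (𝕜 := 𝕜)).symm := by
  refine Isometry.of_dist_eq fun f g => ?_
  conv_rhs => rw [← betaHom.apply_symm_apply f, ← betaHom.apply_symm_apply g]
  rw [isometry_betaHom.dist_eq]

/-- Transfer of ideals of `C_B(X)` to ideals of `C(βX, 𝕜)` along `betaHom`. -/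
noncomputable def idealBeta (G : Ideal (X →ᵇ 𝕜)) : Ideal C(StoneCech X, 𝕜) :=
  G.comap ((betaHom (X := X) (𝕜 := 𝕜)).symm : C(StoneCech X, 𝕜) →+* (X →ᵇ 𝕜))

theorem mem_idealBeta {G : Ideal (X →ᵇ 𝕜)} {g : C(StoneCech X, 𝕜)} :
    g ∈ idealBeta G ↔ betaHom.symm g ∈ G := Iff.rfl

theorem betaHom_mem_idealBeta {G : Ideal (X →ᵇ 𝕜)} {f : X →ᵇ 𝕜} :
    betaHom f ∈ idealBeta G ↔ f ∈ G := by
  rw [mem_idealBeta, betaHom.symm_apply_apply]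

theorem idealBeta_comap (J : Ideal C(StoneCech X, 𝕜)) :
    idealBeta (J.comap ((betaHom (X := X) (𝕜 := 𝕜)) : (X →ᵇ 𝕜) →+* C(StoneCech X, 𝕜))) = J := by
  ext g
  rw [mem_idealBeta, Ideal.mem_comap]
  simp

theorem comap_idealBeta (G : Ideal (X →ᵇ 𝕜)) :
    (idealBeta G).comap ((betaHom (X := X) (𝕜 := 𝕜)) : (X →ᵇ 𝕜) →+* C(StoneCech X, 𝕜)) = G := by
  ext f
  rw [Ideal.mem_comap]
  exact betaHom_mem_idealBeta

theorem isClosed_idealBeta {G : Ideal (X →ᵇ 𝕜)} (hG : IsClosed (G : Set (X →ᵇ 𝕜))) :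
    IsClosed (idealBeta G : Set C(StoneCech X, 𝕜)) :=
  hG.preimage isometry_betaHom_symm.continuous

theorem isClosed_comap_betaHom {J : Ideal C(StoneCech X, 𝕜)}
    (hJ : IsClosed (J : Set C(StoneCech X, 𝕜))) :
    IsClosed ((J.comap ((betaHom (X := X) (𝕜 := 𝕜)) :
      (X →ᵇ 𝕜) →+* C(StoneCech X, 𝕜)) : Ideal (X →ᵇ 𝕜)) : Set (X →ᵇ 𝕜)) :=
  hJ.preimage isometry_betaHom.continuous

theorem mem_lambdaSet {G : Ideal (X →ᵇ 𝕜)} {p : StoneCech X} :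
    p ∈ lambdaSet G ↔ ∃ g ∈ G, betaExt g p ≠ 0 := by
  simp [lambdaSet]

theorem isOpen_lambdaSet (G : Ideal (X →ᵇ 𝕜)) : IsOpen (lambdaSet G) :=
  isOpen_biUnion fun g _ => isOpen_compl_singleton.preimage (continuous_betaExt g)

theorem lambdaSet_mono {G G' : Ideal (X →ᵇ 𝕜)} (h : G ≤ G') : lambdaSet G ⊆ lambdaSet G' := by
  intro p hp
  obtain ⟨g, hg, hgp⟩ := mem_lambdaSet.mp hp
  exact mem_lambdaSet.mpr ⟨g, h hg, hgp⟩

theorem setOfIdeal_idealBeta (G : Ideal (X →ᵇ 𝕜)) :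
    ContinuousMap.setOfIdeal (idealBeta G) = lambdaSet G := by
  ext p
  rw [ContinuousMap.mem_setOfIdeal, mem_lambdaSet]
  constructor
  · rintro ⟨g, hg, hgp⟩
    exact ⟨betaHom.symm g, hg, by rwa [betaExt_symm_betaHom]⟩
  · rintro ⟨g, hg, hgp⟩
    exact ⟨betaHom g, betaHom_mem_idealBeta.mpr hg, hgp⟩

theorem idealBeta_eq_idealOfSet {G : Ideal (X →ᵇ 𝕜)} (hG : IsClosed (G : Set (X →ᵇ 𝕜))) :
    idealBeta G = ContinuousMap.idealOfSet 𝕜 (lambdaSet G) := by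
  rw [← setOfIdeal_idealBeta,
    ContinuousMap.idealOfSet_ofIdeal_isClosed (isClosed_idealBeta hG)]

theorem eq_comap_idealOfSet {G : Ideal (X →ᵇ 𝕜)} (hG : IsClosed (G : Set (X →ᵇ 𝕜))) :
    G = (ContinuousMap.idealOfSet 𝕜 (lambdaSet G)).comap
      ((betaHom (X := X) (𝕜 := 𝕜)) : (X →ᵇ 𝕜) →+* C(StoneCech X, 𝕜)) := by
  rw [← idealBeta_eq_idealOfSet hG, comap_idealBeta]

theorem idealOfSet_mono {Y : Type*} [TopologicalSpace Y] {s t : Set Y} (h : s ⊆ t) :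
    ContinuousMap.idealOfSet (X := Y) 𝕜 s ≤ ContinuousMap.idealOfSet (X := Y) 𝕜 t := by
  intro f hf
  rw [ContinuousMap.mem_idealOfSet] at hf ⊢
  exact fun x hx => hf (fun hxs => hx (h hxs))

theorem lambdaSet_comap_idealOfSet {U : Set (StoneCech X)} (hU : IsOpen U) :
    lambdaSet ((ContinuousMap.idealOfSet 𝕜 U).comap
      ((betaHom (X := X) (𝕜 := 𝕜)) : (X →ᵇ 𝕜) →+* C(StoneCech X, 𝕜))) = U := by
  rw [← setOfIdeal_idealBeta, idealBeta_comap, ContinuousMap.setOfIdeal_ofSet_of_isOpen 𝕜 hU]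

/-- The order isomorphism between closed subideals of a closed ideal `H` of `C_B(X)` and open
subsets of `λ_H X`. -/
noncomputable def subIdealIso (H : Ideal (X →ᵇ 𝕜)) (hcl : IsClosed (H : Set (X →ᵇ 𝕜))) :
    {G : Ideal (X →ᵇ 𝕜) // IsClosed (G : Set (X →ᵇ 𝕜)) ∧ G ≤ H} ≃o
      Opens ↥(lambdaSet H) where
  toFun G := ⟨Subtype.val ⁻¹' lambdaSet G.1,
    (isOpen_lambdaSet G.1).preimage continuous_subtype_val⟩
  invFun W :=
    ⟨(ContinuousMap.idealOfSet 𝕜 (Subtype.val '' (W : Set ↥(lambdaSet H)))).comap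
        ((betaHom (X := X) (𝕜 := 𝕜)) : (X →ᵇ 𝕜) →+* C(StoneCech X, 𝕜)),
      isClosed_comap_betaHom (ContinuousMap.idealOfSet_closed (R := 𝕜) _),
      by
        have h1 : (Subtype.val '' (W : Set ↥(lambdaSet H))) ⊆ lambdaSet H := by
          rintro - ⟨p, -, rfl⟩; exact p.2
        calc (ContinuousMap.idealOfSet 𝕜 (Subtype.val '' (W : Set ↥(lambdaSet H)))).comap
              ((betaHom (X := X) (𝕜 := 𝕜)) : (X →ᵇ 𝕜) →+* C(StoneCech X, 𝕜))
            ≤ (ContinuousMap.idealOfSet 𝕜 (lambdaSet H)).comap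
              ((betaHom (X := X) (𝕜 := 𝕜)) : (X →ᵇ 𝕜) →+* C(StoneCech X, 𝕜)) :=
              Ideal.comap_mono (idealOfSet_mono h1)
          _ = H := (eq_comap_idealOfSet hcl).symm⟩
  left_inv G := by
    have hsub : lambdaSet G.1 ⊆ lambdaSet H := lambdaSet_mono G.2.2
    have himg : Subtype.val '' (Subtype.val ⁻¹' lambdaSet G.1 : Set ↥(lambdaSet H)) =
        lambdaSet G.1 := by
      rw [Subtype.image_preimage_coe]
      exact Set.inter_eq_right.mpr hsub
    apply Subtype.ext
    show Ideal.comap _ (ContinuousMap.idealOfSet 𝕜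
      (Subtype.val '' (Subtype.val ⁻¹' lambdaSet G.1 : Set ↥(lambdaSet H)))) = G.1
    rw [himg]
    exact (eq_comap_idealOfSet G.2.1).symm
  right_inv W := by
    have hopen : IsOpen (Subtype.val '' (W : Set ↥(lambdaSet H))) :=
      (isOpen_lambdaSet H).isOpenMap_subtype_val _ W.2
    apply Opens.ext
    show Subtype.val ⁻¹' lambdaSet _ = (W : Set ↥(lambdaSet H))
    rw [lambdaSet_comap_idealOfSet hopen, Set.preimage_image_eq _ Subtype.val_injective]
  map_rel_iff' := by
    intro G G'
    constructor
    · intro h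
      have hsub : lambdaSet G.1 ⊆ lambdaSet G'.1 := by
        intro p hp
        have hpH : p ∈ lambdaSet H := lambdaSet_mono G.2.2 hp
        exact h (show (⟨p, hpH⟩ : ↥(lambdaSet H)) ∈ Subtype.val ⁻¹' lambdaSet G.1 from hp)
      show G.1 ≤ G'.1
      calc G.1 = (ContinuousMap.idealOfSet 𝕜 (lambdaSet G.1)).comap
            ((betaHom (X := X) (𝕜 := 𝕜)) : (X →ᵇ 𝕜) →+* C(StoneCech X, 𝕜)) :=
            eq_comap_idealOfSet G.2.1
        _ ≤ (ContinuousMap.idealOfSet 𝕜 (lambdaSet G'.1)).comap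
            ((betaHom (X := X) (𝕜 := 𝕜)) : (X →ᵇ 𝕜) →+* C(StoneCech X, 𝕜)) :=
            Ideal.comap_mono (idealOfSet_mono hsub)
        _ = G'.1 := (eq_comap_idealOfSet G'.2.1).symm
    · intro h
      exact fun p hp => lambdaSet_mono h hp

end Aux

section OpensIso

open TopologicalSpace

variable {S T : Type*} [TopologicalSpace S] [TopologicalSpace T] [T1Space S] [T1Space T]

theorem opens_le_compl_singleton_iff (V : Opens S) (x : S) :
    V ≤ (({x} : Closeds S)).compl ↔ x ∉ V := by
  constructor
  · intro h hx
    exact (h hx : x ∈ ({x} : Set S)ᶜ) rfl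
  · intro hx p hp
    exact fun (hpx : p ∈ ({x} : Set S)) => hx (by rwa [Set.mem_singleton_iff.mp hpx] at hp)

theorem exists_image_coatom (e : Opens S ≃o Opens T) (p : S) :
    ∃ x : T, e (({p} : Closeds S)).compl = (({x} : Closeds T)).compl := by
  have h1 : IsCoatom ((({p} : Closeds S)).compl : Opens S) := Opens.isCoatom_iff.mpr ⟨p, rfl⟩
  exact Opens.isCoatom_iff.mp ((e.isCoatom_iff _).mpr h1)

/-- The point map induced by an order isomorphism of open-set lattices of T1 spaces. -/
noncomputable def pointMap (e : Opens S ≃o Opens T) (p : S) : T :=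
  (exists_image_coatom e p).choose

theorem mem_pointMap_iff (e : Opens S ≃o Opens T) (p : S) (V : Opens T) :
    pointMap e p ∈ V ↔ p ∈ e.symm V := by
  have hspec : e (({p} : Closeds S)).compl = (({pointMap e p} : Closeds T)).compl :=
    (exists_image_coatom e p).choose_spec
  rw [← not_iff_not, ← opens_le_compl_singleton_iff, ← opens_le_compl_singleton_iff, ← hspec]
  exact e.symm_apply_le.symm

/-- An order isomorphism between the open-set lattices of two T1 spaces induces a
homeomorphism. -/
noncomputable def homeoOfOpensIso (e : Opens S ≃o Opens T) : S ≃ₜ T where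
  toFun := pointMap e
  invFun := pointMap e.symm
  left_inv p := by
    refine Inseparable.eq ?_
    rw [inseparable_iff_forall_isOpen]
    intro s hs
    have h1 := mem_pointMap_iff e.symm (pointMap e p) ⟨s, hs⟩
    rw [OrderIso.symm_symm] at h1
    have h2 := mem_pointMap_iff e p (e ⟨s, hs⟩)
    rw [e.symm_apply_apply] at h2
    exact h1.trans h2
  right_inv q := by
    refine Inseparable.eq ?_
    rw [inseparable_iff_forall_isOpen]
    intro s hs
    have h1 := mem_pointMap_iff e (pointMap e.symm q) ⟨s, hs⟩
    have h2 := mem_pointMap_iff e.symm q (e.symm ⟨s, hs⟩)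
    rw [OrderIso.symm_symm, e.apply_symm_apply] at h2
    exact h1.trans h2
  continuous_toFun := by
    rw [continuous_def]
    intro s hs
    have : pointMap e ⁻¹' s = ((e.symm ⟨s, hs⟩ : Opens S) : Set S) := by
      ext p
      exact mem_pointMap_iff e p ⟨s, hs⟩
    rw [this]
    exact (e.symm ⟨s, hs⟩).2
  continuous_invFun := by
    rw [continuous_def]
    intro s hs
    have : pointMap e.symm ⁻¹' s = ((e.symm.symm ⟨s, hs⟩ : Opens T) : Set T) := by
      ext q
      exact mem_pointMap_iff e.symm q ⟨s, hs⟩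
    rw [this]
    exact (e.symm.symm ⟨s, hs⟩).2

end OpensIso

/-- For a Tychonoff space `X` and non-vanishing closed ideals `H`, `H'` of `C_B(X)`:
`sp(H)` and `sp(H')` are homeomorphic iff the posets of closed subideals of `H` and of `H'`
are order-isomorphic. -/
theorem spectra_homeomorphic_iff {X : Type*} [TopologicalSpace X] [T35Space X]
    {𝕜 : Type*} [RCLike 𝕜] (H H' : Ideal (X →ᵇ 𝕜))
    (hcl : IsClosed (H : Set (X →ᵇ 𝕜))) (hnv : ∀ x : X, ∃ h ∈ H, h x ≠ 0)
    (hcl' : IsClosed (H' : Set (X →ᵇ 𝕜))) (hnv' : ∀ x : X, ∃ h ∈ H', h x ≠ 0) :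
    Nonempty (↥(lambdaSet H) ≃ₜ ↥(lambdaSet H')) ↔
      Nonempty
        ({G : Ideal (X →ᵇ 𝕜) // IsClosed (G : Set (X →ᵇ 𝕜)) ∧ G ≤ H} ≃o
         {G : Ideal (X →ᵇ 𝕜) // IsClosed (G : Set (X →ᵇ 𝕜)) ∧ G ≤ H'}) := by
  constructor
  · rintro ⟨φ⟩
    exact ⟨((subIdealIso H hcl).trans φ.opensCongr).trans (subIdealIso H' hcl').symm⟩
  · rintro ⟨ψ⟩
    exact ⟨homeoOfOpensIso (((subIdealIso H hcl).symm.trans ψ).trans (subIdealIso H' hcl'))⟩
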